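/- For fixed l ≥ 3 and all m, the number A_l of codewords of weight l in the Hamming code of length 2^m−1 satisfies 2^{(l−1)m} − (l + C(l,2))·2^{(l−2)m} ≤ l!·A_l ≤ 2^{(l−1)m}. Consequently, l!·A_l / 2^{(l−1)m} → 1 as m → ∞. -/

import Mathlib

open Finset

/-- The number of codewords of weight `l` in the null space of `H`. -/
noncomputable def numCodewords {r n : ℕ} (H : Matrix (Fin r) (Fin n) (ZMod 2)) (l : ℕ) : ℕ :=
  Nat.card {c : Fin n → ZMod 2 //
    H.mulVec c = 0 ∧ (Finset.univ.filter fun j => c j = 1).card = l}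

section Aux

lemma stmt18_sumZero_card (m k : ℕ) :
    ((univ : Finset (Fin (k+1) → (Fin m → ZMod 2))).filter
      (fun g => ∑ i, g i = 0)).card = (2 ^ m) ^ k := by
  have : ((univ : Finset (Fin (k+1) → (Fin m → ZMod 2))).filter
      (fun g => ∑ i, g i = 0)).card
      = ((univ : Finset (Fin k → (Fin m → ZMod 2)))).card := by
    apply Finset.card_nbij' (i := fun g => fun j : Fin k => g j.castSucc)
      (j := fun h => Fin.snoc h (-∑ i, h i))
    · intro a _; simp
    · intro h _
      simp only [mem_coe, mem_filter, mem_univ, true_and]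
      rw [Fin.sum_univ_castSucc]
      simp
    · intro g hg
      simp only [mem_coe, mem_filter, mem_univ, true_and] at hg
      funext i
      refine Fin.lastCases ?_ ?_ i
      · beta_reduce; rw [Fin.snoc_last]
        rw [Fin.sum_univ_castSucc] at hg
        exact neg_eq_of_add_eq_zero_right hg
      · intro j; beta_reduce; rw [Fin.snoc_castSucc]
    · intro h _
      funext j
      simp [Fin.snoc_castSucc]
  rw [this]
  simp [Finset.card_univ]

lemma stmt18_restrict_bound {m l : ℕ} (a b : Fin l) (hab : a ≠ b)
    (S : Finset (Fin l → (Fin m → ZMod 2)))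
    (hdet : ∀ g₁ ∈ S, ∀ g₂ ∈ S, (∀ c, c ≠ a → c ≠ b → g₁ c = g₂ c) → g₁ = g₂) :
    S.card ≤ (2 ^ m) ^ (l - 2) := by
  have h1 : S.card ≤ (univ : Finset ({c : Fin l // c ≠ a ∧ c ≠ b} → (Fin m → ZMod 2))).card := by
    apply Finset.card_le_card_of_injOn (fun g => fun c => g c.1)
    · intro g _; exact mem_univ _
    · intro g₁ h₁ g₂ h₂ h
      exact hdet g₁ h₁ g₂ h₂ (fun c hc1 hc2 => congrFun h ⟨c, hc1, hc2⟩)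
  have h2 : Fintype.card {c : Fin l // c ≠ a ∧ c ≠ b} = l - 2 := by
    rw [Fintype.card_subtype]
    have : (univ : Finset (Fin l)).filter (fun c => c ≠ a ∧ c ≠ b) = univ \ {a, b} := by
      ext c; simp [and_comm]
    rw [this, card_sdiff_of_subset (by simp)]
    simp [card_insert_of_notMem, hab]
  rw [card_univ, Fintype.card_fun] at h1
  simpa [h2] using h1

lemma stmt18_pairs_card (l : ℕ) :
    ((univ : Finset (Fin l × Fin l)).filter (fun p => p.1 < p.2)).card = l.choose 2 := by
  have key : ((univ : Finset (Fin l × Fin l)).filter (fun p => p.1 < p.2)).card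
      = ((univ : Finset (Fin l)).powersetCard 2).card := by
    apply Finset.card_nbij (i := fun p => ({p.1, p.2} : Finset (Fin l)))
    · intro p hp
      simp only [mem_coe, mem_filter] at hp
      simp [Finset.mem_powersetCard, Finset.card_insert_of_notMem, hp.2.ne]
    · intro p hp q hq h
      simp only [coe_filter, Set.mem_setOf_eq, mem_univ, true_and] at hp hq
      simp only at h
      have h1 : p.1 ∈ ({q.1, q.2} : Finset (Fin l)) := by rw [← h]; simp
      have h2 : p.2 ∈ ({q.1, q.2} : Finset (Fin l)) := by rw [← h]; simp
      simp only [mem_insert, mem_singleton] at h1 h2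
      rw [Fin.lt_def] at hp hq
      rw [Fin.ext_iff] at h1 h2
      exact Prod.ext (Fin.ext (by omega)) (Fin.ext (by omega))
    · intro t ht
      simp only [mem_coe, mem_powersetCard] at ht
      obtain ⟨a, b, hab, rfl⟩ := Finset.card_eq_two.mp ht.2
      rcases lt_or_gt_of_ne hab with hlt | hlt
      · exact ⟨(a, b), by simp [hlt], rfl⟩
      · exact ⟨(b, a), by simp [hlt], by simp [Finset.pair_comm]⟩
  rw [key, Finset.card_powersetCard, card_univ, Fintype.card_fin]

lemma stmt18_fiber_card {α : Type*} [Fintype α] [DecidableEq α] {l : ℕ} (t : Finset α)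
    (ht : t.card = l) :
    ((univ : Finset (Fin l → α)).filter
      (fun g => Function.Injective g ∧ univ.image g = t)).card = l.factorial := by
  classical
  have e : Fin l ≃ {x // x ∈ t} := (t.equivFinOfCardEq ht).symm
  have key : ((univ : Finset (Fin l → α)).filter
      (fun g => Function.Injective g ∧ univ.image g = t)).card
      = (univ : Finset (Equiv.Perm (Fin l))).card := by
    symm
    apply Finset.card_nbij (i := fun σ => fun i => (e (σ i) : α))
    · intro σ _
      simp only [mem_coe, mem_filter, mem_univ, true_and]
      constructor
      · exact fun i j hij => σ.injective (e.injective (Subtype.ext hij))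
      · ext v
        simp only [mem_image, mem_univ, true_and]
        constructor
        · rintro ⟨i, rfl⟩; exact (e (σ i)).2
        · intro hv; exact ⟨σ.symm (e.symm ⟨v, hv⟩), by simp⟩
    · intro σ _ τ _ h
      apply Equiv.ext
      intro i
      have := congrFun h i
      exact e.injective (Subtype.ext this)
    · intro g hg
      simp only [mem_coe, mem_filter, mem_univ, true_and] at hg
      obtain ⟨hginj, hgim⟩ := hg
      have hmem : ∀ i, g i ∈ t := by
        intro i; rw [← hgim]; exact mem_image_of_mem _ (mem_univ i)
      set τ : Fin l → Fin l := fun i => e.symm ⟨g i, hmem i⟩ with hτ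
      have hτinj : Function.Injective τ := by
        intro i j hij
        exact hginj (congrArg Subtype.val (e.symm.injective.eq_iff.mp hij) : g i = g j)
      have hbij := (Finite.injective_iff_bijective).mp hτinj
      refine ⟨Equiv.ofBijective τ hbij, mem_coe.mpr (mem_univ _), ?_⟩
      funext i
      simp [Equiv.ofBijective_apply, hτ]
  rw [key, card_univ, Fintype.card_perm, Fintype.card_fin]

lemma stmt18_zmod2_cases (x : ZMod 2) : x = 0 ∨ x = 1 := by revert x; decide

lemma stmt18_mulVec_supp {r n : ℕ} (H : Matrix (Fin r) (Fin n) (ZMod 2)) (c : Fin n → ZMod 2) :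
    H.mulVec c = 0 ↔ ∑ j ∈ univ.filter (fun j => c j = 1), (fun i => H i j) = 0 := by
  have key : ∀ i, H.mulVec c i = ∑ j ∈ univ.filter (fun j => c j = 1), H i j := by
    intro i
    simp only [Matrix.mulVec, dotProduct]
    rw [Finset.sum_filter]
    apply Finset.sum_congr rfl
    intro j _
    rcases stmt18_zmod2_cases (c j) with h | h
    · rw [h, if_neg (by decide), mul_zero]
    · rw [h, if_pos rfl, mul_one]
  rw [funext_iff, funext_iff]
  simp only [Finset.sum_apply, Pi.zero_apply, key]

lemma stmt18_bij1 {r n l : ℕ} (H : Matrix (Fin r) (Fin n) (ZMod 2)) :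
    numCodewords H l = ((univ : Finset (Finset (Fin n))).filter
      (fun s => s.card = l ∧ ∑ j ∈ s, (fun i => H i j) = 0)).card := by
  classical
  rw [numCodewords, Nat.card_eq_fintype_card, Fintype.card_subtype]
  apply Finset.card_nbij (i := fun c => univ.filter (fun j => c j = 1))
  · intro c hc
    simp only [mem_coe, mem_filter, mem_univ, true_and] at hc ⊢
    exact ⟨hc.2, (stmt18_mulVec_supp H c).mp hc.1⟩
  · intro c₁ h₁ c₂ h₂ h
    simp only at h
    funext j
    rcases stmt18_zmod2_cases (c₁ j) with e1 | e1 <;> rcases stmt18_zmod2_cases (c₂ j) with e2 | e2 <;>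
      rw [e1, e2]
    · have : j ∈ univ.filter (fun j => c₂ j = 1) := by simp [e2]
      rw [← h] at this
      simp only [mem_filter] at this
      rw [e1] at this; exact absurd this.2 (by decide)
    · have : j ∈ univ.filter (fun j => c₁ j = 1) := by simp [e1]
      rw [h] at this
      simp only [mem_filter] at this
      rw [e2] at this; exact absurd this.2 (by decide)
  · intro s hs
    simp only [mem_coe, mem_filter, mem_univ, true_and] at hs
    refine ⟨fun j => if j ∈ s then 1 else 0, ?_, ?_⟩
    · have hsupp : (univ.filter (fun j => (if j ∈ s then (1 : ZMod 2) else 0) = 1)) = s := by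
        ext j
        by_cases hj : j ∈ s <;> simp [hj]
      simp only [mem_coe, mem_filter, mem_univ, true_and]
      constructor
      · rw [stmt18_mulVec_supp, hsupp]; exact hs.2
      · rw [hsupp]; exact hs.1
    · ext j
      by_cases hj : j ∈ s <;> simp [hj]

lemma stmt18_col_surj {m : ℕ} (col : Fin (2 ^ m - 1) → (Fin m → ZMod 2))
    (hinj : Function.Injective col) (hnz : ∀ j, col j ≠ 0) :
    ∀ v : Fin m → ZMod 2, v ≠ 0 → ∃ j, col j = v := by
  have himsub : univ.image col ⊆ (univ : Finset (Fin m → ZMod 2)).erase 0 := by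
    intro v hv
    simp only [mem_image, mem_univ, true_and] at hv
    obtain ⟨j, rfl⟩ := hv
    exact mem_erase.mpr ⟨hnz j, mem_univ _⟩
  have hcard : ((univ : Finset (Fin m → ZMod 2)).erase 0).card ≤ (univ.image col).card := by
    rw [card_erase_of_mem (mem_univ _), card_image_of_injective _ hinj]
    simp only [card_univ, Fintype.card_fun, Fintype.card_fin, ZMod.card]
    omega
  have heq := Finset.eq_of_subset_of_card_le himsub hcard
  intro v hv
  have : v ∈ univ.image col := by
    rw [heq]; exact mem_erase.mpr ⟨hv, mem_univ _⟩
  simpa using this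

lemma stmt18_bij2 {m l : ℕ} (col : Fin (2 ^ m - 1) → (Fin m → ZMod 2))
    (hinj : Function.Injective col) (hnz : ∀ j, col j ≠ 0) :
    ((univ : Finset (Finset (Fin (2 ^ m - 1)))).filter
      (fun s => s.card = l ∧ ∑ j ∈ s, col j = 0)).card =
    ((univ : Finset (Finset (Fin m → ZMod 2))).filter
      (fun t => t.card = l ∧ 0 ∉ t ∧ ∑ v ∈ t, v = 0)).card := by
  classical
  apply Finset.card_nbij (i := fun s => s.image col)
  · intro s hs
    simp only [mem_coe, mem_filter, mem_univ, true_and] at hs ⊢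
    refine ⟨by rw [card_image_of_injective _ hinj]; exact hs.1, ?_, ?_⟩
    · intro h0
      obtain ⟨j, _, hj⟩ := mem_image.mp h0
      exact hnz j hj
    · rw [Finset.sum_image (fun a _ b _ h => hinj h)]
      exact hs.2
  · intro s₁ _ s₂ _ h
    exact Finset.image_injective hinj h
  · intro t ht
    simp only [mem_coe, mem_filter, mem_univ, true_and] at ht
    obtain ⟨htc, ht0, hts⟩ := ht
    classical
    set s := t.preimage col hinj.injOn with hsdef
    have him : s.image col = t := by
      rw [hsdef, Finset.image_preimage]
      ext v
      simp only [mem_filter, and_iff_left_iff_imp]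
      intro hv
      obtain ⟨j, hj⟩ := stmt18_col_surj col hinj hnz v (fun h => ht0 (h ▸ hv))
      exact ⟨j, hj⟩
    refine ⟨s, mem_coe.mpr (mem_filter.mpr ⟨mem_univ _, ?_, ?_⟩), him⟩
    · have h1 := card_image_of_injective s hinj
      rw [him] at h1
      omega
    · have h2 : ∑ v ∈ s.image col, v = ∑ j ∈ s, col j :=
        Finset.sum_image (fun a _ b _ h => hinj h)
      rw [him, hts] at h2
      exact h2.symm

lemma stmt18_bij3 {m l : ℕ} :
    ((univ : Finset (Fin l → (Fin m → ZMod 2))).filter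
      (fun g => Function.Injective g ∧ (∀ i, g i ≠ 0) ∧ ∑ i, g i = 0)).card =
    l.factorial * ((univ : Finset (Finset (Fin m → ZMod 2))).filter
      (fun t => t.card = l ∧ 0 ∉ t ∧ ∑ v ∈ t, v = 0)).card := by
  classical
  set T := ((univ : Finset (Fin l → (Fin m → ZMod 2))).filter
      (fun g => Function.Injective g ∧ (∀ i, g i ≠ 0) ∧ ∑ i, g i = 0)) with hT
  set Ct := ((univ : Finset (Finset (Fin m → ZMod 2))).filter
      (fun t => t.card = l ∧ 0 ∉ t ∧ ∑ v ∈ t, v = 0)) with hCt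
  have hmap : ∀ g ∈ T, univ.image g ∈ Ct := by
    intro g hg
    rw [hT, mem_filter] at hg
    obtain ⟨-, hginj, hgnz, hgs⟩ := hg
    rw [hCt, mem_filter]
    refine ⟨mem_univ _, ?_, ?_, ?_⟩
    · rw [card_image_of_injective _ hginj, card_univ, Fintype.card_fin]
    · intro h0
      obtain ⟨i, -, hi⟩ := mem_image.mp h0
      exact hgnz i hi
    · rw [Finset.sum_image (fun a _ b _ h => hginj h)]
      exact hgs
  rw [Finset.card_eq_sum_card_fiberwise hmap]
  have hfib : ∀ t ∈ Ct, (T.filter (fun g => univ.image g = t)).card = l.factorial := by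
    intro t ht
    rw [hCt, mem_filter] at ht
    obtain ⟨-, htc, ht0, hts⟩ := ht
    have : T.filter (fun g => univ.image g = t)
        = univ.filter (fun g => Function.Injective g ∧ univ.image g = t) := by
      ext g
      simp only [hT, mem_filter, mem_univ, true_and]
      constructor
      · rintro ⟨⟨hinj, -, -⟩, him⟩; exact ⟨hinj, him⟩
      · rintro ⟨hinj, him⟩
        refine ⟨⟨hinj, ?_, ?_⟩, him⟩
        · intro i hi
          exact ht0 (him ▸ hi ▸ mem_image_of_mem g (mem_univ i))
        · have h2 : ∑ v ∈ univ.image g, v = ∑ i, g i :=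
            Finset.sum_image (fun a _ b _ h => hinj h)
          rw [him, hts] at h2
          exact h2.symm
    rw [this, stmt18_fiber_card t htc]
  rw [Finset.sum_congr rfl hfib, Finset.sum_const, smul_eq_mul, mul_comm]

lemma stmt18_third_elt {l : ℕ} (hl : 3 ≤ l) (a b : Fin l) : ∃ k : Fin l, k ≠ a ∧ k ≠ b := by
  have hcard : (univ \ {a, b} : Finset (Fin l)).Nonempty := by
    rw [← card_pos, card_sdiff_of_subset (subset_univ _)]
    have h1 : ({a, b} : Finset (Fin l)).card ≤ 2 :=
      (card_insert_le _ _).trans (by simp)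
    have h2 : (univ : Finset (Fin l)).card = l := by simp
    omega
  obtain ⟨k, hk⟩ := hcard
  simp only [mem_sdiff, mem_univ, true_and, mem_insert, mem_singleton, not_or] at hk
  exact ⟨k, hk.1, hk.2⟩

lemma stmt18_main_count {m l : ℕ} (hl : 3 ≤ l) :
    ((univ : Finset (Fin l → (Fin m → ZMod 2))).filter
        (fun g => Function.Injective g ∧ (∀ i, g i ≠ 0) ∧ ∑ i, g i = 0)).card ≤ (2 ^ m) ^ (l - 1)
    ∧ (2 ^ m) ^ (l - 1) ≤
      ((univ : Finset (Fin l → (Fin m → ZMod 2))).filter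
        (fun g => Function.Injective g ∧ (∀ i, g i ≠ 0) ∧ ∑ i, g i = 0)).card
        + (l + l.choose 2) * (2 ^ m) ^ (l - 2) := by
  classical
  set T := ((univ : Finset (Fin l → (Fin m → ZMod 2))).filter
      (fun g => Function.Injective g ∧ (∀ i, g i ≠ 0) ∧ ∑ i, g i = 0)) with hTdef
  set W := ((univ : Finset (Fin l → (Fin m → ZMod 2))).filter
      (fun g => ∑ i, g i = 0)) with hWdef
  have hTW : T ⊆ W := by
    intro g hg
    rw [hTdef, mem_filter] at hg
    rw [hWdef, mem_filter]
    exact ⟨mem_univ _, hg.2.2.2⟩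
  have hWcard : W.card = (2 ^ m) ^ (l - 1) := by
    obtain ⟨k, rfl⟩ : ∃ k, l = k + 1 := ⟨l - 1, by omega⟩
    rw [hWdef, stmt18_sumZero_card]
    congr 1
  constructor
  · exact hWcard ▸ card_le_card hTW
  set Z := univ.biUnion (fun i : Fin l => W.filter (fun g => g i = 0)) with hZdef
  set P := (univ : Finset (Fin l × Fin l)).filter (fun p => p.1 < p.2) with hPdef
  set E := P.biUnion (fun p => W.filter (fun g => g p.1 = g p.2)) with hEdef
  have hsub : W \ T ⊆ Z ∪ E := by
    intro g hg
    rw [mem_sdiff, hWdef, mem_filter, hTdef, mem_filter] at hg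
    obtain ⟨⟨-, hsum⟩, hnT⟩ := hg
    rw [mem_union]
    by_cases hinj : Function.Injective g
    · left
      have : ∃ i, g i = 0 := by
        by_contra hc
        push_neg at hc
        exact hnT ⟨mem_univ _, hinj, hc, hsum⟩
      obtain ⟨i, hi⟩ := this
      rw [hZdef, mem_biUnion]
      exact ⟨i, mem_univ _, mem_filter.mpr ⟨mem_filter.mpr ⟨mem_univ _, hsum⟩, hi⟩⟩
    · right
      obtain ⟨a, b, hab, hne⟩ := Function.not_injective_iff.mp hinj
      rw [hEdef, mem_biUnion]
      rcases lt_or_gt_of_ne hne with hlt | hlt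
      · exact ⟨(a, b), by simp [hPdef, hlt],
          mem_filter.mpr ⟨mem_filter.mpr ⟨mem_univ _, hsum⟩, hab⟩⟩
      · exact ⟨(b, a), by simp [hPdef, hlt],
          mem_filter.mpr ⟨mem_filter.mpr ⟨mem_univ _, hsum⟩, hab.symm⟩⟩
  have hZ : Z.card ≤ l * (2 ^ m) ^ (l - 2) := by
    calc Z.card ≤ ∑ i : Fin l, (W.filter (fun g => g i = 0)).card := card_biUnion_le
    _ ≤ ∑ _i : Fin l, (2 ^ m) ^ (l - 2) := by
        apply Finset.sum_le_sum
        intro i _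
        obtain ⟨b, hb⟩ := Fintype.exists_ne_of_one_lt_card (by simp; omega) i
        apply stmt18_restrict_bound i b (Ne.symm hb)
        intro g₁ h₁ g₂ h₂ hagree
        rw [mem_filter, hWdef, mem_filter] at h₁ h₂
        obtain ⟨⟨-, hs₁⟩, hz₁⟩ := h₁
        obtain ⟨⟨-, hs₂⟩, hz₂⟩ := h₂
        have hsum_eq : ∀ c, c ≠ b → g₁ c = g₂ c := by
          intro c hc
          by_cases hci : c = i
          · rw [hci, hz₁, hz₂]
          · exact hagree c hci hc
        have hb' : g₁ b = g₂ b := by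
          have e₁ : g₁ b + ∑ c ∈ univ.erase b, g₁ c = 0 := by
            rw [Finset.add_sum_erase _ _ (mem_univ b)]; exact hs₁
          have e₂ : g₂ b + ∑ c ∈ univ.erase b, g₂ c = 0 := by
            rw [Finset.add_sum_erase _ _ (mem_univ b)]; exact hs₂
          have he : ∑ c ∈ univ.erase b, g₁ c = ∑ c ∈ univ.erase b, g₂ c := by
            apply Finset.sum_congr rfl
            intro c hc
            exact hsum_eq c (Finset.ne_of_mem_erase hc)
          rw [he] at e₁
          exact add_right_cancel (e₁.trans e₂.symm)
        funext c
        by_cases hcb : c = b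
        · rw [hcb]; exact hb'
        · exact hsum_eq c hcb
    _ = l * (2 ^ m) ^ (l - 2) := by simp [mul_comm]
  have hE : E.card ≤ l.choose 2 * (2 ^ m) ^ (l - 2) := by
    calc E.card ≤ ∑ p ∈ P, (W.filter (fun g => g p.1 = g p.2)).card := card_biUnion_le
    _ ≤ ∑ _p ∈ P, (2 ^ m) ^ (l - 2) := by
        apply Finset.sum_le_sum
        intro p hp
        rw [hPdef, mem_filter] at hp
        have hp12 : p.1 ≠ p.2 := hp.2.ne
        obtain ⟨k, hk1, hk2⟩ := stmt18_third_elt hl p.1 p.2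
        apply stmt18_restrict_bound p.2 k (Ne.symm hk2)
        intro g₁ h₁ g₂ h₂ hagree
        rw [mem_filter, hWdef, mem_filter] at h₁ h₂
        obtain ⟨⟨-, hs₁⟩, he₁⟩ := h₁
        obtain ⟨⟨-, hs₂⟩, he₂⟩ := h₂
        have hp2 : g₁ p.2 = g₂ p.2 := by
          rw [← he₁, ← he₂]
          exact hagree p.1 hp12 (Ne.symm hk1)
        have hsum_eq : ∀ c, c ≠ k → g₁ c = g₂ c := by
          intro c hc
          by_cases hcp : c = p.2
          · rw [hcp]; exact hp2
          · exact hagree c hcp hc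
        have hk' : g₁ k = g₂ k := by
          have e₁ : g₁ k + ∑ c ∈ univ.erase k, g₁ c = 0 := by
            rw [Finset.add_sum_erase _ _ (mem_univ k)]; exact hs₁
          have e₂ : g₂ k + ∑ c ∈ univ.erase k, g₂ c = 0 := by
            rw [Finset.add_sum_erase _ _ (mem_univ k)]; exact hs₂
          have he : ∑ c ∈ univ.erase k, g₁ c = ∑ c ∈ univ.erase k, g₂ c := by
            apply Finset.sum_congr rfl
            intro c hc
            exact hsum_eq c (Finset.ne_of_mem_erase hc)
          rw [he] at e₁
          exact add_right_cancel (e₁.trans e₂.symm)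
        funext c
        by_cases hck : c = k
        · rw [hck]; exact hk'
        · exact hsum_eq c hck
    _ = l.choose 2 * (2 ^ m) ^ (l - 2) := by
        rw [Finset.sum_const, smul_eq_mul]
        congr 1
        rw [hPdef]
        exact stmt18_pairs_card l
  have h1 : W.card ≤ T.card + (W \ T).card := by
    have := Finset.card_sdiff_add_card_eq_card hTW
    omega
  have h2 : (W \ T).card ≤ Z.card + E.card :=
    (card_le_card hsub).trans (card_union_le _ _)
  rw [hWcard] at h1
  nlinarith [hZ, hE, h1, h2]

end Aux

/-- Bounds on l!·A_l for the Hamming code of length 2^m − 1 and the resulting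
asymptotics l!·A_l / 2^{(l−1)m} → 1 for fixed l ≥ 3. -/
theorem stmt18 (l : ℕ) (hl : 3 ≤ l)
    (H : ∀ m : ℕ, Matrix (Fin m) (Fin (2 ^ m - 1)) (ZMod 2))
    (hinj : ∀ m, Function.Injective (fun j : Fin (2 ^ m - 1) => fun i => H m i j))
    (hnz : ∀ m, ∀ j, (fun i => H m i j) ≠ (0 : Fin m → ZMod 2)) :
    (∀ m : ℕ,
      (2 : ℤ) ^ ((l - 1) * m) - (l + l.choose 2) * 2 ^ ((l - 2) * m) ≤
          (l.factorial : ℤ) * numCodewords (H m) l ∧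
        (l.factorial : ℤ) * numCodewords (H m) l ≤ 2 ^ ((l - 1) * m)) ∧
    Filter.Tendsto
      (fun m : ℕ => (l.factorial * numCodewords (H m) l : ℝ) / 2 ^ ((l - 1) * m))
      Filter.atTop (nhds 1) := by
  classical
  -- key identity and bounds in ℕ
  have key : ∀ m : ℕ, l.factorial * numCodewords (H m) l ≤ 2 ^ ((l - 1) * m)
      ∧ 2 ^ ((l - 1) * m) ≤ l.factorial * numCodewords (H m) l
        + (l + l.choose 2) * 2 ^ ((l - 2) * m) := by
    intro m
    have hid : l.factorial * numCodewords (H m) l =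
        ((univ : Finset (Fin l → (Fin m → ZMod 2))).filter
          (fun g => Function.Injective g ∧ (∀ i, g i ≠ 0) ∧ ∑ i, g i = 0)).card := by
      rw [stmt18_bij1 (H m), stmt18_bij2 (fun j => fun i => H m i j) (hinj m) (hnz m),
        ← stmt18_bij3]
    have hmc := stmt18_main_count (m := m) hl
    rw [← hid] at hmc
    have hpow1 : (2 : ℕ) ^ ((l - 1) * m) = (2 ^ m) ^ (l - 1) := by
      rw [← pow_mul, mul_comm]
    have hpow2 : (2 : ℕ) ^ ((l - 2) * m) = (2 ^ m) ^ (l - 2) := by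
      rw [← pow_mul, mul_comm]
    rw [hpow1, hpow2]
    exact ⟨hmc.1, hmc.2⟩
  have part1 : ∀ m : ℕ,
      (2 : ℤ) ^ ((l - 1) * m) - (l + l.choose 2) * 2 ^ ((l - 2) * m) ≤
          (l.factorial : ℤ) * numCodewords (H m) l ∧
        (l.factorial : ℤ) * numCodewords (H m) l ≤ 2 ^ ((l - 1) * m) := by
    intro m
    obtain ⟨h1, h2⟩ := key m
    constructor
    · have := (Nat.cast_le (α := ℤ)).mpr h2
      push_cast at this ⊢
      linarith
    · have := (Nat.cast_le (α := ℤ)).mpr h1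
      push_cast at this ⊢
      linarith
  refine ⟨part1, ?_⟩
  -- asymptotics
  have hml : ∀ m : ℕ, (l - 1) * m = (l - 2) * m + m := by
    intro m
    have : l - 1 = (l - 2) + 1 := by omega
    rw [this, add_mul, one_mul]
  set C : ℝ := (l : ℝ) + l.choose 2 with hC
  have hlow : ∀ m : ℕ, 1 - C * (1 / 2) ^ m ≤
      (l.factorial * numCodewords (H m) l : ℝ) / 2 ^ ((l - 1) * m) := by
    intro m
    obtain ⟨h1, -⟩ := part1 m
    have hD : (0 : ℝ) < 2 ^ ((l - 1) * m) := by positivity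
    have hcast : ((2 : ℝ) ^ ((l - 1) * m) - C * 2 ^ ((l - 2) * m)) ≤
        (l.factorial * numCodewords (H m) l : ℝ) := by
      rw [hC]
      exact_mod_cast h1
    rw [le_div_iff₀ hD]
    calc (1 - C * (1 / 2) ^ m) * 2 ^ ((l - 1) * m)
        = 2 ^ ((l - 1) * m) - C * ((1 / 2) ^ m * 2 ^ ((l - 1) * m)) := by ring
      _ = 2 ^ ((l - 1) * m) - C * 2 ^ ((l - 2) * m) := by
          congr 2
          rw [hml m, pow_add]
          field_simp
          rw [← mul_pow]; norm_num
      _ ≤ _ := hcast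
  have hup : ∀ m : ℕ, (l.factorial * numCodewords (H m) l : ℝ) / 2 ^ ((l - 1) * m) ≤ 1 := by
    intro m
    obtain ⟨-, h2⟩ := part1 m
    have hD : (0 : ℝ) < 2 ^ ((l - 1) * m) := by positivity
    rw [div_le_one hD]
    exact_mod_cast h2
  have hlt : Filter.Tendsto (fun m : ℕ => 1 - C * (1 / 2) ^ m) Filter.atTop (nhds 1) := by
    have h0 : Filter.Tendsto (fun m : ℕ => C * (1 / 2) ^ m) Filter.atTop (nhds 0) := by
      have := tendsto_pow_atTop_nhds_zero_of_lt_one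
        (by norm_num : (0:ℝ) ≤ 1 / 2) (by norm_num : (1:ℝ) / 2 < 1)
      simpa using this.const_mul C
    simpa using (tendsto_const_nhds (x := (1:ℝ))).sub h0
  exact tendsto_of_tendsto_of_tendsto_of_le_of_le hlt tendsto_const_nhds hlow hup
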